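/- Let f : ℝⁿ → ℝⁿ be locally Lipschitz with f(0)=0, V a C¹ Lyapunov function for ẋ = f(x), W : ℝⁿ → ℝ₊ continuous with W(x) ≤ −∇V(x)·f(x) for all x, b > 0, and suppose exp(−b)|x| ≤ |z(s,x)| ≤ exp(b)|x| for all s ∈ [0, φ(x)], where z(·,x) is the flow. Define W̃(x) := min{W(y) : exp(−b)|x| ≤ |y| ≤ exp(b)|x|}. Then for every x and every h ∈ [0, φ(x)], V(z(h,x)) ≤ V(x) − h W̃(x). -/

import Mathlib

open Real RealInnerProductSpace

theorem stmt13 (n : ℕ) (f : EuclideanSpace ℝ (Fin n) → EuclideanSpace ℝ (Fin n))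
    (hf : LocallyLipschitz f) (hf0 : f 0 = 0)
    (V : EuclideanSpace ℝ (Fin n) → ℝ) (hVC1 : ContDiff ℝ 1 V)
    (hVnonneg : ∀ x, 0 ≤ V x) (hV0 : V 0 = 0) (hVpos : ∀ x ≠ 0, 0 < V x)
    (hVrad : ∀ M : ℝ, IsCompact {x | V x ≤ M})
    (hLyap : ∀ x ≠ 0, ⟪gradient V x, f x⟫ < 0)
    (W : EuclideanSpace ℝ (Fin n) → ℝ) (hWc : Continuous W)
    (hWnonneg : ∀ x, 0 ≤ W x)
    (hWle : ∀ x, W x ≤ -⟪gradient V x, f x⟫)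
    (b : ℝ) (hb : 0 < b)
    (φ : EuclideanSpace ℝ (Fin n) → ℝ) (hφ : ∀ x, 0 < φ x)
    (z : ℝ → EuclideanSpace ℝ (Fin n) → EuclideanSpace ℝ (Fin n))
    (hz0 : ∀ x, z 0 x = x)
    (hzode : ∀ x s, HasDerivAt (fun t => z t x) (f (z s x)) s)
    (hann : ∀ x, ∀ s ∈ Set.Icc (0:ℝ) (φ x),
      Real.exp (-b) * ‖x‖ ≤ ‖z s x‖ ∧ ‖z s x‖ ≤ Real.exp b * ‖x‖)
    (Wt : EuclideanSpace ℝ (Fin n) → ℝ)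
    (hWt : ∀ x, IsLeast
      {w | ∃ y, Real.exp (-b) * ‖x‖ ≤ ‖y‖ ∧ ‖y‖ ≤ Real.exp b * ‖x‖ ∧ w = W y} (Wt x)) :
    ∀ x, ∀ h ∈ Set.Icc (0:ℝ) (φ x), V (z h x) ≤ V x - h * Wt x := by
  intro x h hh
  set g : ℝ → ℝ := fun s => V (z s x) + s * Wt x with hg
  have hderiv : ∀ s : ℝ, HasDerivAt g (⟪gradient V (z s x), f (z s x)⟫ + Wt x) s := by
    intro s
    have hgrad : HasGradientAt V (gradient V (z s x)) (z s x) :=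
      ((hVC1.differentiable one_ne_zero) (z s x)).hasGradientAt
    have hV' := hgrad.hasFDerivAt.comp_hasDerivAt s (hzode x s)
    have : HasDerivAt (fun t => V (z t x)) ⟪gradient V (z s x), f (z s x)⟫ s := by
      have h2 := hV'; simp only [InnerProductSpace.toDual_apply_apply] at h2; exact h2
    exact this.add (hasDerivAt_mul_const (Wt x))
  have hcont : Continuous g := by
    have : Differentiable ℝ g := fun s => (hderiv s).differentiableAt
    exact this.continuous
  have hanti : AntitoneOn g (Set.Icc 0 (φ x)) := by
    apply antitoneOn_of_deriv_nonpos (convex_Icc 0 (φ x)) hcont.continuousOn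
    · exact fun s _ => (hderiv s).differentiableAt.differentiableWithinAt
    · intro s hs
      rw [interior_Icc] at hs
      rw [(hderiv s).deriv]
      have hsIcc : s ∈ Set.Icc (0:ℝ) (φ x) := Set.Ioo_subset_Icc_self hs
      have hmem : W (z s x) ∈ {w | ∃ y, Real.exp (-b) * ‖x‖ ≤ ‖y‖ ∧
          ‖y‖ ≤ Real.exp b * ‖x‖ ∧ w = W y} :=
        ⟨z s x, (hann x s hsIcc).1, (hann x s hsIcc).2, rfl⟩
      have hWtle : Wt x ≤ W (z s x) := (hWt x).2 hmem
      have := hWle (z s x)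
      linarith
  have h0 : g h ≤ g 0 := hanti (Set.left_mem_Icc.2 (hφ x).le) hh hh.1
  simp only [hg, hz0, zero_mul, add_zero] at h0
  linarith
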